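/- Suppose G is connected with finite diameter and infinitely many vertices, and μ(G) = Σ_v μ(v) < ∞. Then for every finitely supported f with ‖f‖_μ = 1, the energy satisfies B(f,f) ≥ 1/(4 μ(G) diam(G)); i.e., the Dirichlet Laplacian has strictly positive lower bound. -/

import Mathlib

open UniformSpace Filter Topology
open scoped ENNReal

noncomputable section

/-- A locally finite edge-weighted (resistance) graph. -/
structure WGraph (V : Type*) where
  Adj : V → V → Prop
  symm : ∀ u v, Adj u v → Adj v u
  loopless : ∀ v, ¬ Adj v v
  R : V → V → ℝ
  Rsymm : ∀ u v, R u v = R v u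
  Rpos : ∀ u v, Adj u v → 0 < R u v
  locFin : ∀ v, {u | Adj u v}.Finite

namespace WGraph

variable {V : Type*} (G : WGraph V)

/-- The set of edges, as unordered pairs of vertices. -/
def edgeSet : Set (Sym2 V) := {e | ∃ u v, G.Adj u v ∧ e = s(u, v)}

/-- The set of total lengths of finite paths joining `u` to `v`. -/
def pathLengths (u v : V) : Set ℝ :=
  {L | ∃ (n : ℕ) (p : ℕ → V), p 0 = u ∧ p n = v ∧
        (∀ k < n, G.Adj (p k) (p (k + 1))) ∧
        L = ∑ k ∈ Finset.range n, G.R (p k) (p (k + 1))}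

/-- `G` is connected: any two vertices are joined by a finite path. -/
def Connected : Prop := ∀ u v : V, (G.pathLengths u v).Nonempty

/-- The metric on the vertex set is the minimal resistance path metric of `G`. -/
def IsPathMetric [MetricSpace V] : Prop :=
  ∀ u v : V, dist u v = sInf (G.pathLengths u v)

/-- Eventually flat functions: the values differ across only finitely many edges. -/
def EventuallyFlat (φ : V → ℝ) : Prop :=
  {p : V × V | G.Adj p.1 p.2 ∧ φ p.1 ≠ φ p.2}.Finite

open Classical in
/-- The conductance: the reciprocal resistance on edges, `0` off edges. -/
def cond (u v : V) : ℝ := if G.Adj u v then (G.R u v)⁻¹ else 0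

/-- `f` is harmonic at `v`: its value is the conductance-weighted average of the
values at the adjacent vertices. -/
def HarmonicAt (f : V → ℝ) (v : V) : Prop :=
  f v = (∑ u ∈ (G.locFin v).toFinset, G.cond u v)⁻¹ *
          ∑ u ∈ (G.locFin v).toFinset, G.cond u v * f u

/-- The weighted `ℓ²(μ)` inner product. -/
def winner (μ : V → ℝ) (f g : V → ℝ) : ℝ := ∑' v, f v * g v * μ v

/-- The bilinear (energy) form associated to conductances `C`. -/
def Bform (C : V → V → ℝ) (f g : V → ℝ) : ℝ :=
  (1 / 2) * ∑' p : V × V, C p.1 p.2 * (f p.1 - f p.2) * (g p.1 - g p.2)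

/-- The formal Laplacian `Δ_μ`. -/
def lap (C : V → V → ℝ) (μ : V → ℝ) (f : V → ℝ) (v : V) : ℝ :=
  (1 / μ v) * ∑' u, C u v * (f v - f u)

/-- The (possibly infinite) energy of `f`. -/
def energy (C : V → V → ℝ) (f : V → ℝ) : ℝ≥0∞ :=
  (1 / 2) * ∑' p : V × V, ENNReal.ofReal (C p.1 p.2 * (f p.1 - f p.2) ^ 2)

variable [MetricSpace V]

/-- A path in the completion `Ḡ` joining `x` and `y`: a two-sided sequence of
vertices (stationary steps are allowed, so this encodes finite paths, rays and
double rays) converging to `x` and `y` at its two ends. -/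
structure CPath (x y : Completion V) where
  p : ℤ → V
  step : ∀ k, p k = p (k + 1) ∨ G.Adj (p k) (p (k + 1))
  tendsto_left : Tendsto (fun n : ℕ => ((p (-(n : ℤ)) : V) : Completion V)) atTop (nhds x)
  tendsto_right : Tendsto (fun n : ℕ => ((p (n : ℤ) : V) : Completion V)) atTop (nhds y)

end WGraph

/-- The path `γ` uses (contains) the edge `e`. -/
def WGraph.CPath.uses {V : Type*} [MetricSpace V] {G : WGraph V}
    {x y : Completion V} (γ : G.CPath x y) (e : Sym2 V) : Prop :=
  ∃ k : ℤ, γ.p k ≠ γ.p (k + 1) ∧ e = s(γ.p k, γ.p (k + 1))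

namespace WGraph

variable {V : Type*} (G : WGraph V) [MetricSpace V]

/-- The completion `Ḡ` is weakly connected: any two distinct points admit a
finite set of edges met by every path joining them. -/
def WeaklyConnected : Prop :=
  ∀ x y : Completion V, x ≠ y →
    ∃ W : Set (Sym2 V), W.Finite ∧ W ⊆ G.edgeSet ∧
      ∀ γ : G.CPath x y, ∃ e ∈ W, γ.uses e

end WGraph



namespace WGraph

lemma path_simplify {V : Type*} (G : WGraph V) :
    ∀ n : ℕ, ∀ p : ℕ → V, (∀ k < n, G.Adj (p k) (p (k+1))) →
    ∃ (m : ℕ) (q : ℕ → V), q 0 = p 0 ∧ q m = p n ∧ (∀ k < m, G.Adj (q k) (q (k+1))) ∧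
      (∑ k ∈ Finset.range m, G.R (q k) (q (k+1))) ≤ (∑ k ∈ Finset.range n, G.R (p k) (p (k+1))) ∧
      (∀ i ≤ m, ∀ j ≤ m, q i = q j → i = j) := by
  intro n
  induction n using Nat.strong_induction_on with
  | _ n IH =>
  intro p hadj
  by_cases hinj : ∀ i ≤ n, ∀ j ≤ n, p i = p j → i = j
  · exact ⟨n, p, rfl, rfl, hadj, le_refl _, hinj⟩
  · push_neg at hinj
    obtain ⟨i, hi, j, hj, hpij, hij⟩ := hinj
    wlog h : i < j generalizing i j
    · exact this j hj i hi hpij.symm (Ne.symm hij) (by omega)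
    set d := j - i with hd
    have hdpos : 0 < d := by omega
    set m0 := n - d with hm0
    have hm0n : m0 < n := by omega
    have him0 : i ≤ m0 := by omega
    set q : ℕ → V := fun k => if k ≤ i then p k else p (k + d) with hq
    have hq0 : q 0 = p 0 := by simp [hq]
    have hqk : ∀ k, i ≤ k → q k = p (k + d) := by
      intro k hk
      rcases eq_or_lt_of_le hk with h' | h'
      · show (if k ≤ i then p k else p (k + d)) = p (k + d)
        rw [if_pos (le_of_eq h'.symm), ← h', hpij]
        congr 1; omega
      · show (if k ≤ i then p k else p (k + d)) = p (k + d)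
        rw [if_neg (by omega)]
    have hqlt : ∀ k, k ≤ i → q k = p k := by
      intro k hk
      show (if k ≤ i then p k else p (k + d)) = p k
      rw [if_pos hk]
    have hqm0 : q m0 = p n := by
      rw [hqk m0 him0]; congr 1; omega
    have hadjq : ∀ k < m0, G.Adj (q k) (q (k+1)) := by
      intro k hk
      rcases lt_or_ge k i with h' | h'
      · rw [hqlt k h'.le, hqlt (k+1) h']
        exact hadj k (by omega)
      · rw [hqk k h', hqk (k+1) (by omega)]
        have := hadj (k + d) (by omega)
        have e : k + 1 + d = k + d + 1 := by omega
        rw [e]; exact this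
    have hRnn : ∀ k < n, 0 ≤ G.R (p k) (p (k+1)) := fun k hk => (G.Rpos _ _ (hadj k hk)).le
    have hsum : (∑ k ∈ Finset.range m0, G.R (q k) (q (k+1)))
        = (∑ k ∈ Finset.range i, G.R (p k) (p (k+1)))
          + ∑ k ∈ Finset.Ico j n, G.R (p k) (p (k+1)) := by
      rw [Finset.range_eq_Ico, ← Finset.sum_Ico_consecutive _ (Nat.zero_le i) him0]
      congr 1
      · rw [← Finset.range_eq_Ico]
        refine Finset.sum_congr rfl fun k hk => ?_
        rw [Finset.mem_range] at hk
        rw [hqlt k hk.le, hqlt (k+1) hk]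
      · rw [Finset.sum_Ico_eq_sum_range, Finset.sum_Ico_eq_sum_range]
        have e : n - j = m0 - i := by omega
        rw [e]
        refine Finset.sum_congr rfl fun k hk => ?_
        rw [hqk (i + k) (by omega), hqk (i + k + 1) (by omega)]
        have e1 : i + k + d = j + k := by omega
        have e2 : i + k + 1 + d = j + k + 1 := by omega
        rw [e1, e2]
    have hle : (∑ k ∈ Finset.range m0, G.R (q k) (q (k+1)))
        ≤ ∑ k ∈ Finset.range n, G.R (p k) (p (k+1)) := by
      rw [hsum, Finset.range_eq_Ico i, Finset.range_eq_Ico n,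
        ← Finset.sum_Ico_consecutive (fun k => G.R (p k) (p (k+1))) (Nat.zero_le i) (le_trans h.le hj),
        ← Finset.sum_Ico_consecutive (fun k => G.R (p k) (p (k+1))) h.le hj]
      have hmid : 0 ≤ ∑ k ∈ Finset.Ico i j, G.R (p k) (p (k+1)) := by
        refine Finset.sum_nonneg fun k hk => ?_
        rw [Finset.mem_Ico] at hk
        exact hRnn k (by omega)
      linarith
    obtain ⟨m, q', h0, hm, hadj', hsle, hinj'⟩ := IH m0 hm0n q hadjq
    exact ⟨m, q', h0.trans hq0, hm.trans hqm0, hadj', hsle.trans hle, hinj'⟩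

end WGraph

/-- for a connected infinite graph of finite diameter and finite
total vertex measure, the energy of a finitely supported unit vector is bounded
below by `1/(4 μ(G) diam(G))`. -/
theorem dirichlet_lower_bound {V : Type*} [MetricSpace V] [Countable V] [Infinite V]
    (G : WGraph V) (hmet : G.IsPathMetric) (hconn : G.Connected)
    (μ : V → ℝ) (hμ : ∀ v, 0 < μ v) (hμsum : Summable μ)
    (D : ℝ) (hD : ∀ u v : V, dist u v ≤ D)
    (f : V → ℝ) (hsupp : (Function.support f).Finite)
    (hnorm : (∑' v, f v ^ 2 * μ v) = 1) :
    ENNReal.ofReal (1 / (4 * (∑' v, μ v) * D)) ≤ WGraph.energy G.cond f := by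
  classical
  by_cases htop : WGraph.energy G.cond f = ⊤
  · rw [htop]; exact le_top
  set T : ℝ≥0∞ := ∑' p : V × V, ENNReal.ofReal (G.cond p.1 p.2 * (f p.1 - f p.2) ^ 2) with hT
  have henergy : WGraph.energy G.cond f = (1/2 : ℝ≥0∞) * T := rfl
  have hTne : T ≠ ⊤ := by
    intro h
    exact htop (by rw [henergy, h, ENNReal.mul_top (by norm_num)])
  set E : ℝ := T.toReal with hEdef
  have hE0 : (0:ℝ) ≤ E := ENNReal.toReal_nonneg
  obtain ⟨u, hu⟩ : ∃ u, f u = 0 := by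
    obtain ⟨u, hu⟩ := (hsupp.infinite_compl).nonempty
    exact ⟨u, Function.notMem_support.mp hu⟩
  have key : ∀ v : V, ∀ L ∈ G.pathLengths u v, f v ^ 2 ≤ L * E := by
    rintro v L ⟨n, p, hp0, hpn, hadjp, rfl⟩
    obtain ⟨m, q, hq0, hqm, hadjq, hsle, hinjq⟩ := G.path_simplify n p hadjp
    have hRpos : ∀ k < m, 0 < G.R (q k) (q (k+1)) := fun k hk => G.Rpos _ _ (hadjq k hk)
    have hCdef : ∀ k < m, G.cond (q k) (q (k+1)) = (G.R (q k) (q (k+1)))⁻¹ :=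
      fun k hk => if_pos (hadjq k hk)
    have cs := Finset.sum_mul_sq_le_sq_mul_sq (Finset.range m)
        (fun k => Real.sqrt (G.R (q k) (q (k+1))))
        (fun k => Real.sqrt (G.cond (q k) (q (k+1))) * (f (q (k+1)) - f (q k)))
    have lhs_eq : (∑ k ∈ Finset.range m, Real.sqrt (G.R (q k) (q (k+1))) *
          (Real.sqrt (G.cond (q k) (q (k+1))) * (f (q (k+1)) - f (q k)))) = f v - f u := by
      rw [show f v - f u = f (q m) - f (q 0) by rw [hq0, hqm, hp0, hpn],
          ← Finset.sum_range_sub (fun k => f (q k)) m]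
      refine Finset.sum_congr rfl fun k hk => ?_
      rw [Finset.mem_range] at hk
      rw [hCdef k hk, Real.sqrt_inv, ← mul_assoc,
          mul_inv_cancel₀ (Real.sqrt_ne_zero'.mpr (hRpos k hk)), one_mul]
    have r1 : (∑ k ∈ Finset.range m, (Real.sqrt (G.R (q k) (q (k+1)))) ^ 2)
        = ∑ k ∈ Finset.range m, G.R (q k) (q (k+1)) :=
      Finset.sum_congr rfl fun k hk => Real.sq_sqrt (hRpos k (Finset.mem_range.mp hk)).le
    have r2 : (∑ k ∈ Finset.range m,
          (Real.sqrt (G.cond (q k) (q (k+1))) * (f (q (k+1)) - f (q k))) ^ 2)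
        = ∑ k ∈ Finset.range m, G.cond (q k) (q (k+1)) * (f (q k) - f (q (k+1))) ^ 2 := by
      refine Finset.sum_congr rfl fun k hk => ?_
      rw [Finset.mem_range] at hk
      rw [mul_pow, Real.sq_sqrt (by rw [hCdef k hk]; exact inv_nonneg.2 (hRpos k hk).le)]
      ring
    rw [lhs_eq, r1, r2, hu, sub_zero] at cs
    have hCnn : ∀ k ∈ Finset.range m,
        (0:ℝ) ≤ G.cond (q k) (q (k+1)) * (f (q k) - f (q (k+1))) ^ 2 := by
      intro k hk
      rw [Finset.mem_range] at hk
      rw [hCdef k hk]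
      exact mul_nonneg (inv_nonneg.2 (hRpos k hk).le) (sq_nonneg _)
    have hinj2 : ∀ x ∈ Finset.range m, ∀ y ∈ Finset.range m,
        (fun k => (q k, q (k+1))) x = (fun k => (q k, q (k+1))) y → x = y := by
      intro x hx y hy hxy
      rw [Finset.mem_range] at hx hy
      exact hinjq x (by omega) y (by omega) (congrArg Prod.fst hxy)
    have hfac : (∑ k ∈ Finset.range m, G.cond (q k) (q (k+1)) * (f (q k) - f (q (k+1))) ^ 2) ≤ E := by
      rw [hEdef, ← ENNReal.ofReal_le_iff_le_toReal hTne, ENNReal.ofReal_sum_of_nonneg hCnn,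
          show (∑ k ∈ Finset.range m,
              ENNReal.ofReal (G.cond (q k) (q (k+1)) * (f (q k) - f (q (k+1))) ^ 2))
            = ∑ pr ∈ (Finset.range m).image (fun k => (q k, q (k+1))),
                ENNReal.ofReal (G.cond pr.1 pr.2 * (f pr.1 - f pr.2) ^ 2)
            from (Finset.sum_image (f := fun pr : V × V => ENNReal.ofReal (G.cond pr.1 pr.2 * (f pr.1 - f pr.2) ^ 2)) hinj2).symm, hT]
      exact ENNReal.sum_le_tsum _
    have hL'nn : (0:ℝ) ≤ ∑ k ∈ Finset.range m, G.R (q k) (q (k+1)) :=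
      Finset.sum_nonneg fun k hk => (hRpos k (Finset.mem_range.mp hk)).le
    calc f v ^ 2 ≤ (∑ k ∈ Finset.range m, G.R (q k) (q (k+1))) *
          ∑ k ∈ Finset.range m, G.cond (q k) (q (k+1)) * (f (q k) - f (q (k+1))) ^ 2 := cs
      _ ≤ (∑ k ∈ Finset.range n, G.R (p k) (p (k+1))) * E :=
          mul_le_mul hsle hfac (Finset.sum_nonneg hCnn) (le_trans hL'nn hsle)
  have keyd : ∀ v : V, f v ^ 2 ≤ D * E := by
    intro v
    have hS := hconn u v
    have hdd : f v ^ 2 ≤ dist u v * E := by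
      rcases hE0.eq_or_lt with hE | hE
      · obtain ⟨L, hL⟩ := hS
        have h1 := key v L hL
        rw [← hE] at h1 ⊢
        simpa using h1
      · have hlb : f v ^ 2 / E ≤ sInf (G.pathLengths u v) := by
          refine le_csInf hS fun L hL => ?_
          rw [div_le_iff₀ hE]
          exact key v L hL
        rw [hmet u v]
        calc f v ^ 2 = (f v ^ 2 / E) * E := by field_simp
          _ ≤ sInf (G.pathLengths u v) * E := mul_le_mul_of_nonneg_right hlb hE0
    exact hdd.trans (mul_le_mul_of_nonneg_right (hD u v) hE0)
  have hM : (0:ℝ) < ∑' v, μ v := by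
    have v0 : V := Classical.arbitrary V
    exact lt_of_lt_of_le (hμ v0) (Summable.le_tsum hμsum v0 fun w _ => (hμ w).le)
  have hDpos : (0:ℝ) < D := by
    obtain ⟨a, b, hab⟩ := exists_pair_ne V
    exact lt_of_lt_of_le (dist_pos.mpr hab) (hD a b)
  have hsum1 : Summable (fun v => f v ^ 2 * μ v) := by
    apply summable_of_ne_finset_zero (s := hsupp.toFinset)
    intro v hv
    have hfv : f v = 0 := by
      by_contra h
      exact hv (hsupp.mem_toFinset.mpr h)
    rw [hfv]; ring
  have hmain : 1 ≤ D * E * (∑' v, μ v) := by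
    rw [← hnorm]
    calc (∑' v, f v ^ 2 * μ v) ≤ ∑' v, (D * E) * μ v :=
        Summable.tsum_le_tsum (fun v => mul_le_mul_of_nonneg_right (keyd v) (hμ v).le) hsum1
          (hμsum.mul_left _)
      _ = (D * E) * ∑' v, μ v := tsum_mul_left
      _ = D * E * (∑' v, μ v) := by ring
  have hreal : 1 / (4 * (∑' v, μ v) * D) ≤ (1/2 : ℝ) * E := by
    rw [div_le_iff₀ (by positivity)]
    nlinarith [hmain, hM, hDpos, hE0]
  calc ENNReal.ofReal (1 / (4 * (∑' v, μ v) * D))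
      ≤ ENNReal.ofReal ((1/2 : ℝ) * E) := ENNReal.ofReal_le_ofReal hreal
    _ = ENNReal.ofReal (1/2 : ℝ) * ENNReal.ofReal E := ENNReal.ofReal_mul (by norm_num)
    _ = (1/2 : ℝ≥0∞) * T := by
        rw [hEdef, ENNReal.ofReal_toReal hTne]
        congr 1
        rw [ENNReal.ofReal_div_of_pos (by norm_num)]
        norm_num
    _ = WGraph.energy G.cond f := henergy.symm
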